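/- For every ideal I of R = ℂ[x,y] with n = dim_ℂ R/I finite, there exists an ideal I' of R generated by monomials such that dim_ℂ R/I' = n and dim_ℂ I'/(𝔪·I') ≥ dim_ℂ I/(𝔪·I). In other words, the maximum of μ over ideals of colength n is attained on monomial ideals. -/

import Mathlib

open MvPolynomial

noncomputable section

/-- The polynomial ring `R = ℂ[x,y]`. -/
abbrev Rpoly : Type := MvPolynomial (Fin 2) ℂ

/-- The maximal ideal `𝔪 = ⟨x, y⟩` of `R` at the origin. -/
def mIdeal : Ideal Rpoly := Ideal.span {X 0, X 1}

/-- `μ(I) = dim_ℂ I/(𝔪·I)`, computed as the ℂ-dimension of the image of `I`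
in `R/(𝔪·I)`. -/
noncomputable def mu (I : Ideal Rpoly) : ℕ :=
  Module.finrank ℂ
    (Submodule.restrictScalars ℂ (I.map (Ideal.Quotient.mk (mIdeal * I))))

/-- An ideal of `R = ℂ[x,y]` is a monomial ideal if it is generated by a set of
monomials `x^a y^b`. -/
def IsMonomialIdeal (I : Ideal Rpoly) : Prop :=
  ∃ S : Set (ℕ × ℕ), I = Ideal.span ((fun ab : ℕ × ℕ => X 0 ^ ab.1 * X 1 ^ ab.2) '' S)

namespace StmtAux

/-- A fixed monomial order on exponents in two variables. -/
abbrev m2 : MonomialOrder (Fin 2) := MonomialOrder.lex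

/-- The leading exponent of a polynomial (junk value `0` for `f = 0`). -/
noncomputable def mdeg (f : Rpoly) : Fin 2 →₀ ℕ :=
  m2.toSyn.symm (f.support.sup fun d => m2.toSyn d)

lemma toSyn_mdeg (f : Rpoly) :
    m2.toSyn (mdeg f) = f.support.sup fun d => m2.toSyn d :=
  m2.toSyn.apply_symm_apply _

lemma le_mdeg {f : Rpoly} {d : Fin 2 →₀ ℕ} (h : d ∈ f.support) :
    m2.toSyn d ≤ m2.toSyn (mdeg f) := by
  rw [toSyn_mdeg]; exact Finset.le_sup h

lemma mdeg_mem_support {f : Rpoly} (hf : f ≠ 0) : mdeg f ∈ f.support := by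
  obtain ⟨d, hd, h⟩ :=
    Finset.exists_mem_eq_sup f.support (support_nonempty.2 hf) fun d => m2.toSyn d
  have : mdeg f = d := by rw [mdeg, h, AddEquiv.symm_apply_apply]
  rwa [this]

lemma coeff_mdeg_ne_zero {f : Rpoly} (hf : f ≠ 0) : coeff (mdeg f) f ≠ 0 :=
  mem_support_iff.1 (mdeg_mem_support hf)

lemma mdeg_lt {f : Rpoly} {D : Fin 2 →₀ ℕ} (hf : f ≠ 0)
    (hsupp : ∀ d ∈ f.support, m2.toSyn d ≤ m2.toSyn D) (hD : coeff D f = 0) :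
    m2.toSyn (mdeg f) < m2.toSyn D := by
  refine lt_of_le_of_ne (hsupp _ (mdeg_mem_support hf)) fun h => ?_
  have : mdeg f = D := m2.toSyn.injective h
  exact coeff_mdeg_ne_zero hf (this ▸ hD)

lemma mdeg_monomial {d : Fin 2 →₀ ℕ} {c : ℂ} (hc : c ≠ 0) :
    mdeg (monomial d c) = d := by
  apply m2.toSyn.injective
  rw [toSyn_mdeg, support_monomial, if_neg hc, Finset.sup_singleton]

lemma monomial_mul_ne_zero {g : Rpoly} (hg : g ≠ 0) (e : Fin 2 →₀ ℕ) :
    monomial e (1 : ℂ) * g ≠ 0 := by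
  intro h
  have hco : coeff (e + mdeg g) (monomial e (1:ℂ) * g) = coeff (mdeg g) g := by
    rw [coeff_monomial_mul, one_mul]
  rw [h, coeff_zero] at hco
  exact coeff_mdeg_ne_zero hg hco.symm

lemma mdeg_monomial_mul {g : Rpoly} (hg : g ≠ 0) (e : Fin 2 →₀ ℕ) :
    mdeg (monomial e (1 : ℂ) * g) = e + mdeg g := by
  classical
  have hco : coeff (e + mdeg g) (monomial e (1:ℂ) * g) = coeff (mdeg g) g := by
    rw [coeff_monomial_mul, one_mul]
  apply m2.toSyn.injective
  apply le_antisymm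
  · rw [toSyn_mdeg]
    apply Finset.sup_le
    intro d hd
    have hd' := support_mul _ _ hd
    rw [Finset.mem_add] at hd'
    obtain ⟨a, ha, b, hb, rfl⟩ := hd'
    rw [support_monomial, if_neg one_ne_zero, Finset.mem_singleton] at ha
    subst ha
    rw [map_add, map_add]
    exact add_le_add le_rfl (le_mdeg hb)
  · exact le_mdeg (mem_support_iff.2 (by rw [hco]; exact coeff_mdeg_ne_zero hg))

/-- The set of leading exponents of nonzero elements of `J` (an upward closed set). -/
def LSet (J : Ideal Rpoly) : Set (Fin 2 →₀ ℕ) := {d | ∃ f ∈ J, f ≠ 0 ∧ mdeg f = d}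

/-- The initial ideal of `J`. -/
noncomputable def inIdeal (J : Ideal Rpoly) : Ideal Rpoly :=
  Ideal.span ((fun d => (monomial d (1 : ℂ))) '' LSet J)

lemma LSet_up {J : Ideal Rpoly} {d e : Fin 2 →₀ ℕ} (hd : d ∈ LSet J) (hde : d ≤ e) :
    e ∈ LSet J := by
  obtain ⟨f, hfJ, hf0, hfd⟩ := hd
  refine ⟨monomial (e - d) 1 * f, J.mul_mem_left _ hfJ, monomial_mul_ne_zero hf0 _, ?_⟩
  rw [mdeg_monomial_mul hf0, hfd, tsub_add_cancel_of_le hde]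

lemma support_le_of_mem_span {S : Set (Fin 2 →₀ ℕ)} {f : Rpoly}
    (hf : f ∈ Ideal.span ((fun d => (monomial d (1 : ℂ))) '' S)) :
    ∀ d ∈ f.support, ∃ s ∈ S, s ≤ d := by
  classical
  refine Submodule.span_induction ?_ ?_ ?_ ?_ hf
  · rintro x ⟨s, hs, rfl⟩ d hd
    rw [support_monomial, if_neg one_ne_zero, Finset.mem_singleton] at hd
    exact ⟨s, hs, le_of_eq hd.symm⟩
  · intro d hd; simp at hd
  · intro x y _ _ hx hy d hd
    rcases Finset.mem_union.1 (support_add hd) with h | h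
    exacts [hx d h, hy d h]
  · intro a x _ hx d hd
    have hd' : d ∈ (a * x).support := hd
    have := support_mul _ _ hd'
    rw [Finset.mem_add] at this
    obtain ⟨b, _, c, hc, rfl⟩ := this
    obtain ⟨s, hs, hsc⟩ := hx c hc
    exact ⟨s, hs, hsc.trans le_add_self⟩

lemma monomial_mem_span {S : Set (Fin 2 →₀ ℕ)} {s d : Fin 2 →₀ ℕ}
    (hs : s ∈ S) (hsd : s ≤ d) (c : ℂ) :
    monomial d c ∈ Ideal.span ((fun d => (monomial d (1 : ℂ))) '' S) := by
  have h : monomial d c = monomial (d - s) c * monomial s 1 := by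
    rw [monomial_mul, mul_one, tsub_add_cancel_of_le hsd]
  rw [h]
  exact Ideal.mul_mem_left _ _ (Ideal.subset_span ⟨s, hs, rfl⟩)

lemma LSet_inIdeal (J : Ideal Rpoly) : LSet (inIdeal J) = LSet J := by
  ext d
  constructor
  · rintro ⟨f, hfJ, hf0, rfl⟩
    obtain ⟨s, hs, hsd⟩ := support_le_of_mem_span hfJ _ (mdeg_mem_support hf0)
    exact LSet_up hs hsd
  · intro hd
    exact ⟨monomial d 1, monomial_mem_span hd le_rfl 1,
      by simp [monomial_eq_zero], mdeg_monomial one_ne_zero⟩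

lemma algebraMap_quot (J : Ideal Rpoly) (c : ℂ) :
    algebraMap ℂ (Rpoly ⧸ J) c = Ideal.Quotient.mk J (C c) := rfl

lemma mk_smul (J : Ideal Rpoly) (c : ℂ) (f : Rpoly) :
    Ideal.Quotient.mk J (c • f) = c • Ideal.Quotient.mk J f :=
  map_smul (Ideal.Quotient.mkₐ ℂ J) c f

lemma mk_mem_span_std (J : Ideal Rpoly) (f : Rpoly) :
    Ideal.Quotient.mk J f ∈
      Submodule.span ℂ
        ((fun d => Ideal.Quotient.mk J (monomial d (1 : ℂ))) '' (LSet J)ᶜ) := by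
  classical
  by_cases hf : f = 0
  · rw [hf, map_zero]; exact Submodule.zero_mem _
  suffices H : ∀ D : m2.syn, ∀ f : Rpoly, f ≠ 0 → m2.toSyn (mdeg f) = D →
      Ideal.Quotient.mk J f ∈
        Submodule.span ℂ
          ((fun d => Ideal.Quotient.mk J (monomial d (1 : ℂ))) '' (LSet J)ᶜ) by
    exact H _ f hf rfl
  intro D
  induction D using WellFoundedLT.induction with
  | _ D IH =>
    intro f hf hD
    by_cases hmem : mdeg f ∈ LSet J
    · obtain ⟨g, hgJ, hg0, hgd⟩ := hmem
      set c : ℂ := coeff (mdeg f) f * (coeff (mdeg f) g)⁻¹ with hc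
      set f' : Rpoly := f - c • g with hf'
      have hmk : Ideal.Quotient.mk J f = Ideal.Quotient.mk J f' := by
        rw [hf', map_sub, mk_smul, Ideal.Quotient.eq_zero_iff_mem.2 hgJ, smul_zero, sub_zero]
      have hcoeff : coeff (mdeg f) f' = 0 := by
        rw [hf', coeff_sub, coeff_smul, hc, smul_eq_mul]
        have hgne : coeff (mdeg f) g ≠ 0 := by
          rw [← hgd] at *; exact coeff_mdeg_ne_zero hg0
        field_simp
        simp
      have hsupp : ∀ d ∈ f'.support, m2.toSyn d ≤ m2.toSyn (mdeg f) := by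
        intro d hd
        rw [hf', sub_eq_add_neg] at hd
        rcases Finset.mem_union.1 (support_add hd) with h | h
        · exact le_mdeg h
        · rw [support_neg] at h
          have := support_smul h
          have h2 := le_mdeg this
          rw [hgd] at h2
          exact h2
      by_cases hf'0 : f' = 0
      · rw [hmk, hf'0, map_zero]; exact Submodule.zero_mem _
      · have hlt : m2.toSyn (mdeg f') < D := hD ▸ mdeg_lt hf'0 hsupp hcoeff
        rw [hmk]
        exact IH _ hlt f' hf'0 rfl
    · set c : ℂ := coeff (mdeg f) f with hc
      set f' : Rpoly := f - c • monomial (mdeg f) 1 with hf'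
      have hb : Ideal.Quotient.mk J (monomial (mdeg f) (1:ℂ)) ∈
          Submodule.span ℂ
            ((fun d => Ideal.Quotient.mk J (monomial d (1 : ℂ))) '' (LSet J)ᶜ) :=
        Submodule.subset_span ⟨mdeg f, hmem, rfl⟩
      have hmk : Ideal.Quotient.mk J f =
          Ideal.Quotient.mk J f' + c • Ideal.Quotient.mk J (monomial (mdeg f) 1) := by
        rw [hf', map_sub, mk_smul, sub_add_cancel]
      have hcoeff : coeff (mdeg f) f' = 0 := by
        rw [hf', coeff_sub, coeff_smul, coeff_monomial, if_pos rfl, smul_eq_mul, mul_one,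
          sub_self]
      have hsupp : ∀ d ∈ f'.support, m2.toSyn d ≤ m2.toSyn (mdeg f) := by
        intro d hd
        rw [hf', sub_eq_add_neg] at hd
        rcases Finset.mem_union.1 (support_add hd) with h | h
        · exact le_mdeg h
        · rw [support_neg] at h
          have h2 := support_smul h
          rw [support_monomial, if_neg one_ne_zero, Finset.mem_singleton] at h2
          exact le_of_eq (by rw [h2])
      by_cases hf'0 : f' = 0
      · rw [hmk, hf'0, map_zero, zero_add]
        exact Submodule.smul_mem _ _ hb
      · have hlt : m2.toSyn (mdeg f') < D := hD ▸ mdeg_lt hf'0 hsupp hcoeff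
        rw [hmk]
        exact Submodule.add_mem _ (IH _ hlt f' hf'0 rfl) (Submodule.smul_mem _ _ hb)

lemma linearIndependent_std (J : Ideal Rpoly) :
    LinearIndependent ℂ (fun d : ((LSet J)ᶜ : Set (Fin 2 →₀ ℕ)) =>
      Ideal.Quotient.mk J (monomial (d : Fin 2 →₀ ℕ) (1 : ℂ))) := by
  classical
  rw [linearIndependent_iff']
  intro t g hg i hi
  set f : Rpoly := ∑ j ∈ t, g j • monomial (j : Fin 2 →₀ ℕ) (1 : ℂ) with hfdef
  have hfJ : f ∈ J := by
    rw [← Ideal.Quotient.eq_zero_iff_mem, hfdef, map_sum]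
    rw [← hg]
    exact Finset.sum_congr rfl fun j _ => mk_smul _ _ _
  have hcoeff : ∀ j ∈ t, coeff (j : Fin 2 →₀ ℕ) f = g j := by
    intro j hj
    rw [hfdef, coeff_sum]
    rw [Finset.sum_eq_single j]
    · rw [coeff_smul, coeff_monomial, if_pos rfl, smul_eq_mul, mul_one]
    · intro b hb hbj
      rw [coeff_smul, coeff_monomial, if_neg (fun h => hbj (Subtype.coe_injective h)),
        smul_zero]
    · intro h; exact absurd hj h
  have hf0 : f = 0 := by
    by_contra hf0
    have h1 : mdeg f ∈ LSet J := ⟨f, hfJ, hf0, rfl⟩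
    have h2 := mdeg_mem_support hf0
    have h3 : ∃ j ∈ t, (j : Fin 2 →₀ ℕ) = mdeg f := by
      have hsub : ∀ d ∈ f.support, ∃ j ∈ t, (j : Fin 2 →₀ ℕ) = d := by
        intro d hd
        rw [hfdef] at hd
        have hd' := MvPolynomial.support_sum hd
        rw [Finset.mem_biUnion] at hd'
        obtain ⟨j, hj, hdj⟩ := hd'
        have hsupp := support_smul hdj
        rw [support_monomial, if_neg one_ne_zero, Finset.mem_singleton] at hsupp
        exact ⟨j, hj, hsupp.symm⟩
      exact hsub _ h2
    obtain ⟨j, _, hjd⟩ := h3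
    exact (hjd ▸ j.2) h1
  have := hcoeff i hi
  rw [hf0, coeff_zero] at this
  exact this.symm

/-- The standard monomials form a basis of `R ⧸ J`. -/
noncomputable def stdBasis (J : Ideal Rpoly) :
    Module.Basis ((LSet J)ᶜ : Set (Fin 2 →₀ ℕ)) ℂ (Rpoly ⧸ J) := by
  refine Module.Basis.mk (linearIndependent_std J) ?_
  rintro x -
  obtain ⟨f, rfl⟩ := Ideal.Quotient.mk_surjective x
  have h := mk_mem_span_std J f
  rwa [Set.image_eq_range] at h

noncomputable def colength (J : Ideal Rpoly) : ℕ := Module.finrank ℂ (Rpoly ⧸ J)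

lemma stdFinite (J : Ideal Rpoly) [FiniteDimensional ℂ (Rpoly ⧸ J)] :
    ((LSet J)ᶜ).Finite := by
  haveI := FiniteDimensional.fintypeBasisIndex (stdBasis J)
  exact Set.toFinite _

lemma finiteDimensional_of_stdFinite (J : Ideal Rpoly) (h : ((LSet J)ᶜ).Finite) :
    FiniteDimensional ℂ (Rpoly ⧸ J) := by
  haveI := h.fintype
  exact Module.Finite.of_basis (stdBasis J)

lemma colength_eq_ncard (J : Ideal Rpoly) (h : ((LSet J)ᶜ).Finite) :
    colength J = Nat.card ((LSet J)ᶜ : Set (Fin 2 →₀ ℕ)) := by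
  haveI := h.fintype
  rw [colength, Module.finrank_eq_card_basis (stdBasis J), Nat.card_eq_fintype_card]

lemma colength_inIdeal (J : Ideal Rpoly) (h : ((LSet J)ᶜ).Finite) :
    colength (inIdeal J) = colength J := by
  rw [colength_eq_ncard _ (by rw [LSet_inIdeal]; exact h), colength_eq_ncard _ h,
    LSet_inIdeal]

lemma X_mem_mIdeal (i : Fin 2) : (X i : Rpoly) ∈ mIdeal := by
  fin_cases i
  · exact Ideal.subset_span (Set.mem_insert _ _)
  · exact Ideal.subset_span (Set.mem_insert_of_mem _ rfl)

lemma X_eq_monomial (i : Fin 2) : (X i : Rpoly) = monomial (Finsupp.single i 1) 1 := rfl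

lemma stdFinite_mul (J : Ideal Rpoly) (h : ((LSet J)ᶜ).Finite) :
    ((LSet (mIdeal * J))ᶜ).Finite := by
  classical
  have key : ∀ (i : Fin 2) (d : Fin 2 →₀ ℕ), 0 < d i → d ∉ LSet (mIdeal * J) →
      d - Finsupp.single i 1 ∈ (LSet J)ᶜ := by
    intro i d hdi hd
    intro hcon
    obtain ⟨g, hgJ, hg0, hgd⟩ := hcon
    apply hd
    refine ⟨X i * g, Ideal.mul_mem_mul (X_mem_mIdeal i) hgJ, ?_, ?_⟩
    · rw [X_eq_monomial]; exact monomial_mul_ne_zero hg0 _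
    · rw [X_eq_monomial, mdeg_monomial_mul hg0, hgd,
        add_tsub_cancel_of_le (Finsupp.single_le_iff.2 hdi)]
  apply Set.Finite.subset
    (Set.Finite.union
      (Set.Finite.union (h.image (· + Finsupp.single 0 1)) (h.image (· + Finsupp.single 1 1)))
      (Set.finite_singleton 0))
  intro d hd
  by_cases h0 : 0 < d 0
  · refine Or.inl (Or.inl ⟨d - Finsupp.single 0 1, key 0 d h0 hd, ?_⟩)
    exact tsub_add_cancel_of_le (Finsupp.single_le_iff.2 h0)
  · by_cases h1 : 0 < d 1
    · refine Or.inl (Or.inr ⟨d - Finsupp.single 1 1, key 1 d h1 hd, ?_⟩)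
      exact tsub_add_cancel_of_le (Finsupp.single_le_iff.2 h1)
    · refine Or.inr ?_
      have : d = 0 := by
        ext i
        simp only [Finsupp.coe_zero, Pi.zero_apply]
        revert i
        rw [Fin.forall_fin_two]
        omega
      simp [this]

lemma colength_mul (J : Ideal Rpoly) (h : ((LSet (mIdeal * J))ᶜ).Finite) :
    colength (mIdeal * J) = colength J + mu J := by
  haveI hA : FiniteDimensional ℂ (Rpoly ⧸ (mIdeal * J)) := finiteDimensional_of_stdFinite _ h
  have hKJ : mIdeal * J ≤ J := Ideal.mul_le_right
  set S : Ideal (Rpoly ⧸ (mIdeal * J)) := J.map (Ideal.Quotient.mk (mIdeal * J)) with hS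
  have e1 := Submodule.Quotient.restrictScalarsEquiv ℂ S
  have e2 := (DoubleQuot.quotQuotEquivQuotOfLEₐ ℂ hKJ).toLinearEquiv
  have hmap : J.map (Ideal.Quotient.mkₐ ℂ (mIdeal * J)) = S := rfl
  rw [hmap] at e2
  have hq := Submodule.finrank_quotient_add_finrank (Submodule.restrictScalars ℂ S)
  rw [e1.finrank_eq, e2.finrank_eq] at hq
  rw [colength, colength, ← hq, mu]

lemma colength_le {J1 J2 : Ideal Rpoly} (h : J1 ≤ J2)
    [FiniteDimensional ℂ (Rpoly ⧸ J1)] : colength J2 ≤ colength J1 := by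
  let φ : (Rpoly ⧸ J1) →ₐ[ℂ] (Rpoly ⧸ J2) :=
    Ideal.Quotient.liftₐ J1 (Ideal.Quotient.mkₐ ℂ J2)
      (fun a ha => Ideal.Quotient.eq_zero_iff_mem.2 (h ha))
  have hs : Function.Surjective φ := by
    intro x
    obtain ⟨f, rfl⟩ := Ideal.Quotient.mk_surjective x
    exact ⟨Ideal.Quotient.mk J1 f, rfl⟩
  have hrange : LinearMap.range φ.toLinearMap = ⊤ := LinearMap.range_eq_top.2 hs
  have := LinearMap.finrank_range_le φ.toLinearMap
  rw [hrange, finrank_top] at this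
  exact this

lemma mul_inIdeal_le (I : Ideal Rpoly) :
    mIdeal * inIdeal I ≤ inIdeal (mIdeal * I) := by
  rw [mIdeal, inIdeal, Ideal.span_mul_span']
  apply Ideal.span_le.2
  rintro x hx
  rw [Set.mem_mul] at hx
  obtain ⟨a, ha, b, hb, rfl⟩ := hx
  obtain ⟨d, hd, rfl⟩ := hb
  obtain ⟨g, hgI, hg0, hgd⟩ := hd
  have key : ∀ i : Fin 2,
      (X i : Rpoly) * monomial d 1 ∈ inIdeal (mIdeal * I) := by
    intro i
    have hmem : Finsupp.single i 1 + d ∈ LSet (mIdeal * I) := by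
      refine ⟨X i * g, Ideal.mul_mem_mul (X_mem_mIdeal i) hgI, ?_, ?_⟩
      · rw [X_eq_monomial]; exact monomial_mul_ne_zero hg0 _
      · rw [X_eq_monomial, mdeg_monomial_mul hg0, hgd]
    have heq : (X i : Rpoly) * monomial d 1 = monomial (Finsupp.single i 1 + d) 1 := by
      rw [X_eq_monomial, monomial_mul, one_mul]
    rw [heq]
    exact monomial_mem_span hmem le_rfl 1
  rcases ha with rfl | ha
  · exact key 0
  · rw [Set.mem_singleton_iff] at ha
    subst ha
    exact key 1

lemma single_add_single (d : Fin 2 →₀ ℕ) :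
    Finsupp.single 0 (d 0) + Finsupp.single 1 (d 1) = d := by
  ext i
  simp only [Finsupp.add_apply, Finsupp.single_apply]
  revert i
  rw [Fin.forall_fin_two]
  simp

lemma isMonomialIdeal_inIdeal (J : Ideal Rpoly) : IsMonomialIdeal (inIdeal J) := by
  refine ⟨(fun d : Fin 2 →₀ ℕ => (d 0, d 1)) '' LSet J, ?_⟩
  rw [inIdeal, Set.image_image]
  congr 1
  apply Set.image_congr
  intro d _
  show monomial d (1:ℂ) = X 0 ^ (d 0) * X 1 ^ (d 1)
  rw [X_pow_eq_monomial, X_pow_eq_monomial, monomial_mul, one_mul, single_add_single]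

end StmtAux

open StmtAux in
/-- For every ideal `I` of `ℂ[x,y]` of finite colength `n` there is a monomial ideal
`I'` of colength `n` with `μ(I') ≥ μ(I)`: the maximum of `μ` in colength `n` is
attained on monomial ideals. -/
theorem stmt5 (I : Ideal Rpoly) (n : ℕ)
    (hfin : FiniteDimensional ℂ (Rpoly ⧸ I))
    (hn : Module.finrank ℂ (Rpoly ⧸ I) = n) :
    ∃ I' : Ideal Rpoly, IsMonomialIdeal I' ∧
      Module.finrank ℂ (Rpoly ⧸ I') = n ∧ mu I ≤ mu I' := by
  classical
  have hstdI : ((LSet I)ᶜ).Finite := stdFinite I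
  set M := inIdeal I with hM
  have hLM : LSet M = LSet I := LSet_inIdeal I
  have hstdM : ((LSet M)ᶜ).Finite := by rw [hLM]; exact hstdI
  haveI hfinM : FiniteDimensional ℂ (Rpoly ⧸ M) := finiteDimensional_of_stdFinite _ hstdM
  have hmulI : ((LSet (mIdeal * I))ᶜ).Finite := stdFinite_mul I hstdI
  have hmulM : ((LSet (mIdeal * M))ᶜ).Finite := stdFinite_mul M hstdM
  haveI hfinmulM : FiniteDimensional ℂ (Rpoly ⧸ (mIdeal * M)) :=
    finiteDimensional_of_stdFinite _ hmulM
  have hcolM : colength M = n := by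
    rw [hM, colength_inIdeal I hstdI]
    exact hn
  refine ⟨M, isMonomialIdeal_inIdeal I, hcolM, ?_⟩
  have h1 : colength (mIdeal * I) = colength I + mu I := colength_mul I hmulI
  have h2 : colength (mIdeal * M) = colength M + mu M := colength_mul M hmulM
  have h3 : colength (inIdeal (mIdeal * I)) = colength (mIdeal * I) :=
    colength_inIdeal _ hmulI
  have h4 : colength (inIdeal (mIdeal * I)) ≤ colength (mIdeal * M) :=
    colength_le (mul_inIdeal_le I)
  have hcolI : colength I = n := hn
  rw [h3, h1, h2, hcolI, hcolM] at h4
  omega
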